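/- For A_{2n-1}^{(2)}, the auxiliary element a_{\overline{1}}(k) = (-k/[k]^2)( Σ_{i=1}^{n-1} ((q^{(n-i)k} + (-1)^k q^{-(n-i)k})/(q^{nk} + (-1)^k q^{-nk})) a_i(k) + ((q+q^{-1})/(q^{nk}+q^{-nk})) a_n(k) ) satisfies [a_1(k), a_{\overline{1}}(-k)] = 1 at level γ = q, i.e., for even k (where a_n(k) may be nonzero) and odd k separately, given the A_{2n-1}^{(2)} level-one Heisenberg relations [a_i(k), a_j(-k)] = ([k a_{ij}^{(k)}]/k)(q^k - q^{-k})/(q_j - q_j^{-1}) with the appropriate twisted structure constants. -/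
import Mathlib


open Finset

set_option maxHeartbeats 1000000 in
/-- For `A_{2n-1}^{(2)}` at level one (`γ = q`), the auxiliary element
`a_{1̄}(k) = (-k/[k]²)(Σ_{i=1}^{n-1} ((q^{(n-i)k}+(-1)^k q^{-(n-i)k})/(q^{nk}+(-1)^k q^{-nk})) a_i(k)
  + ((q+q⁻¹)/(q^{nk}+q^{-nk})) a_n(k))`
satisfies `[a_1(k), a_{1̄}(-k)] = 1`: as a rational-function identity, the combination of
the level-one Heisenberg structure constants `c_1(j) = [a_1(k), a_j(-k)]` equals `1`. -/
theorem A2n1_dual_boson {K : Type*} [Field K] [CharZero K] (q : K)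
    (hq0 : q ≠ 0) (hq1 : q - q⁻¹ ≠ 0) (hq2 : q ^ 2 - (q ^ 2)⁻¹ ≠ 0)
    (n : ℕ) (hn : 3 ≤ n) (k : ℤ) (hk : k ≠ 0)
    (br : ℤ → K) (hbr : ∀ m, br m = (q ^ m - q ^ (-m)) / (q - q⁻¹))
    (hbrk : br (-k) ≠ 0)
    (hden1 : q ^ ((n : ℤ) * (-k)) + (-1 : K) ^ (-k) * q ^ (-((n : ℤ) * (-k))) ≠ 0)
    (hden2 : q ^ ((n : ℤ) * (-k)) + q ^ (-((n : ℤ) * (-k))) ≠ 0)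
    (pr : ℕ → ℤ) (hpr : ∀ j, pr j = if j = 1 then 2 else if j = 2 then -1 else 0)
    (qd : ℕ → K) (hqd : ∀ j, qd j = if j = n then q ^ 2 else q)
    (c1 : ℕ → K)
    (hc1 : ∀ j, c1 j =
      ((br (k * pr j) + (-1 : K) ^ k * br (k * pr (2*n - j))) / (k : K)) *
        ((q ^ k - q ^ (-k)) / (qd j - (qd j)⁻¹)))
    (cA : ℕ → K)
    (hcA : ∀ i, cA i =
      (q ^ (((n : ℤ) - (i : ℤ)) * (-k)) +
        (-1 : K) ^ (-k) * q ^ (-(((n : ℤ) - (i : ℤ)) * (-k)))) /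
      (q ^ ((n : ℤ) * (-k)) + (-1 : K) ^ (-k) * q ^ (-((n : ℤ) * (-k)))))
    (cB : K)
    (hcB : cB = (q + q⁻¹) / (q ^ ((n : ℤ) * (-k)) + q ^ (-((n : ℤ) * (-k))))) :
    ((k : K) / (br (-k)) ^ 2) *
      ((∑ i ∈ Icc 1 (n-1), cA i * c1 i) + cB * c1 n) = 1 := by
  have hbr0 : br 0 = 0 := by rw [hbr]; simp
  -- c1 n = 0
  have hc1n : c1 n = 0 := by
    have h1 : n ≠ 1 := by omega
    have h2 : n ≠ 2 := by omega
    have h3 : 2 * n - n = n := by omega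
    rw [hc1, hpr, hpr, h3, if_neg h1, if_neg h2]
    simp [hbr0]
  -- the sum reduces to i = 1, 2
  have hsub : ({1, 2} : Finset ℕ) ⊆ Icc 1 (n-1) := by
    intro i hi
    simp only [mem_insert, mem_singleton] at hi
    rw [mem_Icc]; omega
  have hzero : ∀ i ∈ Icc 1 (n-1), i ∉ ({1, 2} : Finset ℕ) → cA i * c1 i = 0 := by
    intro i hi hni
    simp only [mem_insert, mem_singleton, not_or] at hni
    rw [mem_Icc] at hi
    have h1 : 2 * n - i ≠ 1 := by omega
    have h2 : 2 * n - i ≠ 2 := by omega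
    rw [hc1, hpr, hpr, if_neg hni.1, if_neg hni.2, if_neg h1, if_neg h2]
    simp [hbr0]
  have hsum : (∑ i ∈ Icc 1 (n-1), cA i * c1 i) = cA 1 * c1 1 + cA 2 * c1 2 := by
    rw [← Finset.sum_subset hsub hzero]
    rw [Finset.sum_pair (by norm_num : (1:ℕ) ≠ 2)]
  rw [hsum, hc1n, mul_zero, add_zero]
  -- abbreviations
  set a := q ^ k with ha
  set u := q ^ ((n : ℤ) * (-k)) with hu
  set ε := ((-1 : K)) ^ k with hε
  have ha0 : a ≠ 0 := zpow_ne_zero _ hq0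
  have hu0 : u ≠ 0 := zpow_ne_zero _ hq0
  have hεeq : ((-1 : K)) ^ (-k) = ε := by
    rw [hε, zpow_neg, ← inv_zpow, inv_neg, inv_one]
  have hk0 : (k : K) ≠ 0 := Int.cast_ne_zero.mpr hk
  -- rewrite all zpow expressions
  have e0 : q ^ (-k) = a⁻¹ := by rw [ha, zpow_neg]
  have e1 : q ^ (k * (2:ℤ)) = a * a := by
    rw [show k * (2:ℤ) = k + k by ring, zpow_add₀ hq0, ha]
  have e2 : q ^ (-(k * (2:ℤ))) = a⁻¹ * a⁻¹ := by
    rw [show -(k * (2:ℤ)) = (-k) + (-k) by ring, zpow_add₀ hq0, e0]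
  have e3 : q ^ (k * (-1:ℤ)) = a⁻¹ := by rw [show k * (-1:ℤ) = -k by ring, e0]
  have e4 : q ^ (-(k * (-1:ℤ))) = a := by rw [show -(k * (-1:ℤ)) = k by ring, ha]
  have e5 : q ^ (((n:ℤ) - ((1:ℕ):ℤ)) * (-k)) = u * a := by
    push_cast
    rw [show ((n:ℤ) - 1) * (-k) = (n:ℤ) * (-k) + k by ring, zpow_add₀ hq0, ← hu, ← ha]
  have e6 : q ^ (-(((n:ℤ) - ((1:ℕ):ℤ)) * (-k))) = u⁻¹ * a⁻¹ := by
    push_cast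
    rw [show -(((n:ℤ) - 1) * (-k)) = -((n:ℤ) * (-k)) + (-k) by ring, zpow_add₀ hq0,
      zpow_neg, ← hu, e0]
  have e7 : q ^ (((n:ℤ) - ((2:ℕ):ℤ)) * (-k)) = u * (a * a) := by
    push_cast
    rw [show ((n:ℤ) - 2) * (-k) = (n:ℤ) * (-k) + (k + k) by ring, zpow_add₀ hq0,
      zpow_add₀ hq0, ← hu, ← ha]
  have e8 : q ^ (-(((n:ℤ) - ((2:ℕ):ℤ)) * (-k))) = u⁻¹ * (a⁻¹ * a⁻¹) := by
    push_cast
    rw [show -(((n:ℤ) - 2) * (-k)) = -((n:ℤ) * (-k)) + (-k + -k) by ring, zpow_add₀ hq0,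
      zpow_add₀ hq0, zpow_neg, ← hu, e0]
  have e9 : q ^ (-((n:ℤ) * (-k))) = u⁻¹ := by rw [zpow_neg, ← hu]
  -- nonvanishing facts
  have hD : u + ε * u⁻¹ ≠ 0 := by rw [← e9, ← hεeq]; exact hden1
  have hbrk' : a⁻¹ - a ≠ 0 := by
    rw [hbr, neg_neg, e0, ← ha] at hbrk
    intro h
    exact hbrk (by rw [h, zero_div])
  have hbrval : br (-k) = (a⁻¹ - a) / (q - q⁻¹) := by rw [hbr, neg_neg, e0, ← ha]
  -- values of the structure constants
  have g1 : 2 * n - 1 ≠ 1 := by omega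
  have g2 : 2 * n - 1 ≠ 2 := by omega
  have g3 : 2 * n - 2 ≠ 1 := by omega
  have g4 : 2 * n - 2 ≠ 2 := by omega
  have v1 : c1 1 = (a * a - a⁻¹ * a⁻¹) / (q - q⁻¹) / (k : K) * ((a - a⁻¹) / (q - q⁻¹)) := by
    rw [hc1, hpr, hpr, if_pos rfl, if_neg g1, if_neg g2, hqd,
      if_neg (by omega : (1:ℕ) ≠ n)]
    rw [mul_zero, hbr0, mul_zero, add_zero, hbr, e1, e2, e0]
  have v2 : c1 2 = (a⁻¹ - a) / (q - q⁻¹) / (k : K) * ((a - a⁻¹) / (q - q⁻¹)) := by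
    rw [hc1, hpr, hpr, if_neg (by norm_num : (2:ℕ) ≠ 1), if_pos rfl, if_neg g3,
      if_neg g4, hqd, if_neg (by omega : (2:ℕ) ≠ n)]
    rw [mul_zero, hbr0, mul_zero, add_zero, hbr, e3, e4, e0]
  have w1 : cA 1 = (u * a + ε * (u⁻¹ * a⁻¹)) / (u + ε * u⁻¹) := by
    rw [hcA, e5, e6, e9, hεeq]
  have w2 : cA 2 = (u * (a * a) + ε * (u⁻¹ * (a⁻¹ * a⁻¹))) / (u + ε * u⁻¹) := by
    rw [hcA, e7, e8, e9, hεeq]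
  set B := (a⁻¹ - a) / (q - q⁻¹) with hB
  have hB0 : B ≠ 0 := hbrval ▸ hbrk
  have v1' : c1 1 = (a + a⁻¹) * B ^ 2 / (k : K) := by
    rw [v1, hB]
    field_simp
    ring
  have v2' : c1 2 = -(B ^ 2) / (k : K) := by
    rw [v2, hB]
    field_simp
    ring
  have step1 : (k : K) / B ^ 2 * (cA 1 * c1 1 + cA 2 * c1 2)
      = cA 1 * (a + a⁻¹) - cA 2 := by
    rw [v1', v2']
    field_simp
    ring
  have numer : (u * a + ε * (u⁻¹ * a⁻¹)) * (a + a⁻¹)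
      - (u * (a * a) + ε * (u⁻¹ * (a⁻¹ * a⁻¹))) = u + ε * u⁻¹ := by
    field_simp
    ring
  have step2 : cA 1 * (a + a⁻¹) - cA 2 = 1 := by
    rw [w1, w2, div_mul_eq_mul_div, div_sub_div_same, numer, div_self hD]
  rw [hbrval, step1]
  exact step2
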